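/- For any d×d density matrix ρ, the modified trace distance measure of coherence is bounded above by the l₁-norm of coherence: inf_{λ ≥ 0, δ diagonal density matrix} ‖ρ − λδ‖_tr ≤ Σ_{i≠j} |ρ_{ij}|. -/

import Mathlib

open Matrix
open scoped ComplexOrder

/-- The positive semidefinite square root of a positive semidefinite matrix (as defined in
Mathlib of December 2024, since removed). -/
noncomputable def Matrix.PosSemidef.sqrt {n : Type*} [Fintype n] [DecidableEq n]
    {A : Matrix n n ℂ} (hA : A.PosSemidef) : Matrix n n ℂ :=
  hA.isHermitian.eigenvectorUnitary.1 *
    diagonal ((↑) ∘ (√·) ∘ hA.isHermitian.eigenvalues) *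
    (star hA.isHermitian.eigenvectorUnitary : Matrix n n ℂ)

/-- The trace norm of a matrix `A`: `‖A‖_tr = Tr √(AᴴA)`. -/
noncomputable def traceNorm {d : ℕ} (A : Matrix (Fin d) (Fin d) ℂ) : ℝ :=
  ((Matrix.posSemidef_conjTranspose_mul_self A).sqrt.trace).re

lemma diag_entry_nonneg {d : ℕ} {ρ : Matrix (Fin d) (Fin d) ℂ} (hρ : ρ.PosSemidef) (i : Fin d) :
    0 ≤ ρ i i := by
  exact hρ.diag_nonneg

lemma traceNorm_nonneg {d : ℕ} (A : Matrix (Fin d) (Fin d) ℂ) : 0 ≤ traceNorm A := by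
  unfold traceNorm Matrix.PosSemidef.sqrt
  rw [Matrix.trace_mul_cycle, Unitary.coe_star_mul_self, Matrix.one_mul, Matrix.trace_diagonal,
    Complex.re_sum]
  exact Finset.sum_nonneg fun i _ => by simp [Real.sqrt_nonneg]

/-- For a Hermitian matrix, the trace norm is bounded by the entrywise `l₁` norm. -/
lemma traceNorm_le_sum_abs {d : ℕ} {A : Matrix (Fin d) (Fin d) ℂ} (hA : A.IsHermitian) :
    traceNorm A ≤ ∑ j, ∑ k, ‖A j k‖ := by
  classical
  set V : Matrix (Fin d) (Fin d) ℂ := (hA.eigenvectorUnitary : Matrix (Fin d) (Fin d) ℂ) with hV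
  have hVsV : Vᴴ * V = 1 := by
    simpa [Matrix.star_eq_conjTranspose] using
      Matrix.mem_unitaryGroup_iff'.mp hA.eigenvectorUnitary.2
  have hVVs : V * Vᴴ = 1 := by
    simpa [Matrix.star_eq_conjTranspose] using
      Matrix.mem_unitaryGroup_iff.mp hA.eigenvectorUnitary.2
  set lam : Fin d → ℝ := hA.eigenvalues with hlam
  set M : Matrix (Fin d) (Fin d) ℂ :=
      V * Matrix.diagonal (fun i => (Complex.ofReal |lam i|)) * Vᴴ with hM
  have hMpsd : M.PosSemidef := by
    apply (Matrix.PosSemidef.diagonal (fun i => by positivity)).mul_mul_conjTranspose_same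
  have hspec : A = V * Matrix.diagonal (fun i => (lam i : ℂ)) * Vᴴ := by
    have h := hA.spectral_theorem
    rw [Unitary.conjStarAlgAut_apply, ← hV, Matrix.star_eq_conjTranspose] at h
    simpa [Function.comp_def] using h
  have key : ∀ D₁ D₂ : Matrix (Fin d) (Fin d) ℂ,
      (V * D₁ * Vᴴ) * (V * D₂ * Vᴴ) = V * (D₁ * D₂) * Vᴴ := by
    intro D₁ D₂
    calc (V * D₁ * Vᴴ) * (V * D₂ * Vᴴ) = V * (D₁ * ((Vᴴ * V) * (D₂ * Vᴴ))) := by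
            simp only [Matrix.mul_assoc]
      _ = V * (D₁ * D₂) * Vᴴ := by rw [hVsV, Matrix.one_mul]; simp only [Matrix.mul_assoc]
  have hM2 : M ^ 2 = Aᴴ * A := by
    rw [hA.eq, pow_two, hM, hspec, key, key, Matrix.diagonal_mul_diagonal,
      Matrix.diagonal_mul_diagonal]
    have : (fun i => (Complex.ofReal |lam i|) * (Complex.ofReal |lam i|))
        = fun i => ((lam i : ℂ)) * ((lam i : ℂ)) := by
      funext i
      rw [← Complex.ofReal_mul, ← Complex.ofReal_mul, abs_mul_abs_self]
    rw [this]
  have hsqrt : (Matrix.posSemidef_conjTranspose_mul_self A).sqrt = M := by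
    have hAA := (Matrix.posSemidef_conjTranspose_mul_self A).isHermitian
    have e1 : (Matrix.posSemidef_conjTranspose_mul_self A).sqrt = cfc Real.sqrt (Aᴴ * A) := by
      rw [hAA.cfc_eq]; rfl
    have e2 : cfc Real.sqrt (Aᴴ * A) = cfc (fun x : ℝ => |x|) A := by
      rw [hA.eq, ← pow_two, ← cfc_pow_id (R := ℝ) A 2 hA.isSelfAdjoint,
        ← cfc_comp Real.sqrt (· ^ 2) A hA.isSelfAdjoint]
      congr 1; funext x; exact Real.sqrt_sq_eq_abs x
    rw [e1, e2, hA.cfc_eq, hM]; rfl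
  have htr : traceNorm A = ∑ i, |lam i| := by
    unfold traceNorm
    rw [hsqrt, hM, Matrix.trace_mul_cycle, hVsV, Matrix.one_mul,
      Matrix.trace_diagonal, Complex.re_sum]
    simp
  rw [htr]
  -- entrywise bound on eigenvalues
  have hdiag : Vᴴ * A * V = Matrix.diagonal (fun i => (lam i : ℂ)) := by
    rw [hspec]
    simp only [Matrix.mul_assoc]
    rw [hVsV, Matrix.mul_one, ← Matrix.mul_assoc, hVsV, Matrix.one_mul]
  have hlam_entry : ∀ i, (lam i : ℂ) = ∑ j, ∑ k, (starRingEnd ℂ) (V j i) * A j k * V k i := by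
    intro i
    have := congrFun (congrFun hdiag i) i
    rw [Matrix.diagonal_apply_eq] at this
    rw [← this]
    simp only [Matrix.mul_apply, Matrix.conjTranspose_apply, Finset.sum_mul,
      RCLike.star_def]
    rw [Finset.sum_comm]
  have hbound : ∀ i, |lam i| ≤
      ∑ j, ∑ k, ‖V j i‖ * ‖A j k‖ * ‖V k i‖ := by
    intro i
    have h1 : |lam i| = ‖(lam i : ℂ)‖ := by
      rw [Complex.norm_real, Real.norm_eq_abs]
    rw [h1, hlam_entry i]
    calc ‖∑ j, ∑ k, (starRingEnd ℂ) (V j i) * A j k * V k i‖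
        ≤ ∑ j, ‖∑ k, (starRingEnd ℂ) (V j i) * A j k * V k i‖ :=
          norm_sum_le _ _
      _ ≤ ∑ j, ∑ k, ‖V j i‖ * ‖A j k‖ * ‖V k i‖ := by
          apply Finset.sum_le_sum
          intro j _
          refine le_trans (norm_sum_le _ _) (Finset.sum_le_sum fun k _ => ?_)
          rw [norm_mul, norm_mul, Complex.norm_conj]
  have hcol : ∀ j : Fin d, ∑ i, ‖V j i‖ ^ 2 = 1 := by
    intro j
    have h1 := congrFun (congrFun hVVs j) j
    simp only [Matrix.mul_apply, Matrix.conjTranspose_apply, Matrix.one_apply_eq] at h1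
    have h2 : ((∑ i, ‖V j i‖ ^ 2 : ℝ) : ℂ) = 1 := by
      push_cast
      rw [← h1]
      refine Finset.sum_congr rfl fun i _ => ?_
      calc ((‖V j i‖ : ℝ) : ℂ)^2
          = ((‖V j i‖ ^ 2 : ℝ) : ℂ) := by push_cast; ring
        _ = ((Complex.normSq (V j i) : ℝ) : ℂ) := by rw [Complex.sq_norm]
        _ = V j i * star (V j i) := by
            rw [Complex.normSq_eq_conj_mul_self, RCLike.star_def]; ring
    exact_mod_cast h2
  have hCS : ∀ j k : Fin d, ∑ i, ‖V j i‖ * ‖V k i‖ ≤ 1 := by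
    intro j k
    have h := Finset.sum_mul_sq_le_sq_mul_sq Finset.univ
      (fun i => ‖V j i‖) (fun i => ‖V k i‖)
    rw [hcol j, hcol k, mul_one] at h
    have hnn : 0 ≤ ∑ i, ‖V j i‖ * ‖V k i‖ :=
      Finset.sum_nonneg fun i _ => mul_nonneg (norm_nonneg _) (norm_nonneg _)
    nlinarith [h, hnn]
  calc ∑ i, |lam i|
      ≤ ∑ i, ∑ j, ∑ k, ‖V j i‖ * ‖A j k‖ * ‖V k i‖ :=
        Finset.sum_le_sum fun i _ => hbound i
    _ = ∑ j, ∑ k, ‖A j k‖ * ∑ i, ‖V j i‖ * ‖V k i‖ := by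
        rw [Finset.sum_comm]
        apply Finset.sum_congr rfl
        intro j _
        rw [Finset.sum_comm]
        apply Finset.sum_congr rfl
        intro k _
        rw [Finset.mul_sum]
        apply Finset.sum_congr rfl
        intro i _
        ring
    _ ≤ ∑ j, ∑ k, ‖A j k‖ * 1 := by
        apply Finset.sum_le_sum
        intro j _
        apply Finset.sum_le_sum
        intro k _
        exact mul_le_mul_of_nonneg_left (hCS j k) (norm_nonneg _)
    _ = ∑ j, ∑ k, ‖A j k‖ := by simp

/-- For any `d×d` density matrix `ρ`, the modified trace distance measure of
coherence is bounded above by the `l₁`-norm of coherence. -/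
theorem modified_trace_coherence_le_l1 {d : ℕ}
    (ρ : Matrix (Fin d) (Fin d) ℂ) (hρ : ρ.PosSemidef) (hρtr : ρ.trace = 1) :
    sInf {x : ℝ | ∃ (l : ℝ) (δ : Matrix (Fin d) (Fin d) ℂ),
        0 ≤ l ∧ δ.PosSemidef ∧ δ.trace = 1 ∧ δ.IsDiag ∧
        x = traceNorm (ρ - l • δ)}
      ≤ ∑ i, ∑ j, (if i = j then 0 else ‖ρ i j‖) := by
  classical
  set D : Matrix (Fin d) (Fin d) ℂ := Matrix.diagonal (fun i => ρ i i) with hD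
  have hDpsd : D.PosSemidef := Matrix.PosSemidef.diagonal fun i => diag_entry_nonneg hρ i
  have hDtr : D.trace = 1 := by
    rw [hD, Matrix.trace_diagonal, ← hρtr, Matrix.trace]
    rfl
  set A : Matrix (Fin d) (Fin d) ℂ := ρ - D with hA
  have hAherm : A.IsHermitian := hρ.1.sub hDpsd.1
  have hmem : traceNorm A ∈ {x : ℝ | ∃ (l : ℝ) (δ : Matrix (Fin d) (Fin d) ℂ),
      0 ≤ l ∧ δ.PosSemidef ∧ δ.trace = 1 ∧ δ.IsDiag ∧
      x = traceNorm (ρ - l • δ)} := by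
    exact ⟨1, D, zero_le_one, hDpsd, hDtr, Matrix.isDiag_diagonal _, by rw [one_smul]⟩
  have hbdd : BddBelow {x : ℝ | ∃ (l : ℝ) (δ : Matrix (Fin d) (Fin d) ℂ),
      0 ≤ l ∧ δ.PosSemidef ∧ δ.trace = 1 ∧ δ.IsDiag ∧
      x = traceNorm (ρ - l • δ)} := by
    refine ⟨0, fun x hx => ?_⟩
    obtain ⟨l, δ, _, _, _, _, hx⟩ := hx
    rw [hx]; exact traceNorm_nonneg _
  refine le_trans (csInf_le hbdd hmem) ?_
  refine le_trans (traceNorm_le_sum_abs hAherm) (le_of_eq ?_)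
  apply Finset.sum_congr rfl
  intro i _
  apply Finset.sum_congr rfl
  intro j _
  by_cases h : i = j
  · subst h
    simp [hA, hD]
  · simp [hA, hD, Matrix.diagonal_apply_ne _ h, h]
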